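/- For the second-order system obtained by differentiating a conservative Hamiltonian system with one degree of freedom, the deviation curvature matrix is P_H(x,y) = (1/2)·M_H(x,y) + (1/4)·J_H(x)², where M_H(x,y) is the 2×2 matrix whose first row is the transpose of (Hess H₂)(x)·y and whose second row is the transpose of (−Hess H₁)(x)·y, and J_H(x) is the 2×2 matrix ((H₂₁, H₂₂), (−H₁₁, −H₁₂)) evaluated at x. (Proposition 5.1.) -/

import Mathlib

open Matrix

/-- Partial derivative of a scalar function on `ℝ²` in the `i`-th coordinate direction. -/
noncomputable def pd (i : Fin 2) (φ : (Fin 2 → ℝ) → ℝ) (x : Fin 2 → ℝ) : ℝ :=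
  fderiv ℝ φ x (Pi.single i 1)

private lemma contDiff_pd {n : WithTop ℕ∞} {φ : (Fin 2 → ℝ) → ℝ}
    (hφ : ContDiff ℝ (n + 1) φ) (i : Fin 2) : ContDiff ℝ n (pd i φ) :=
  (hφ.fderiv_right le_rfl).clm_apply contDiff_const

private lemma pd_comm {φ : (Fin 2 → ℝ) → ℝ} (hφ : ContDiff ℝ 2 φ) (i j : Fin 2)
    (x : Fin 2 → ℝ) :
    pd i (fun x' => pd j φ x') x = pd j (fun x' => pd i φ x') x := by
  have hd : DifferentiableAt ℝ (fderiv ℝ φ) x :=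
    ((hφ.fderiv_right (m := 1) (by norm_num)).differentiable one_ne_zero).differentiableAt
  have hsym : IsSymmSndFDerivAt ℝ φ x := hφ.contDiffAt.isSymmSndFDerivAt (by simp [minSmoothness_of_isRCLikeNormedField])
  show fderiv ℝ (fun x' => fderiv ℝ φ x' (Pi.single j 1)) x (Pi.single i 1)
      = fderiv ℝ (fun x' => fderiv ℝ φ x' (Pi.single i 1)) x (Pi.single j 1)
  rw [fderiv_clm_apply hd (differentiableAt_const _),
      fderiv_clm_apply hd (differentiableAt_const _)]
  simp [hsym.eq]

private lemma pd_comb {a b : (Fin 2 → ℝ) → ℝ} {x : Fin 2 → ℝ}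
    (ha : DifferentiableAt ℝ a x) (hb : DifferentiableAt ℝ b x)
    (c c1 c2 : ℝ) (j : Fin 2) :
    pd j (fun x' => c * (a x' * c1 + b x' * c2)) x
      = c * (pd j a x * c1 + pd j b x * c2) := by
  unfold pd
  rw [fderiv_const_mul ((ha.mul_const c1).fun_add (hb.mul_const c2)),
      fderiv_fun_add (ha.mul_const c1) (hb.mul_const c2),
      fderiv_mul_const ha, fderiv_mul_const hb]
  simp [mul_add]
  ring

private lemma pd_cmul {a : (Fin 2 → ℝ) → ℝ} {x : Fin 2 → ℝ}
    (ha : DifferentiableAt ℝ a x) (c : ℝ) (l : Fin 2) :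
    pd l (fun x' => c * a x') x = c * pd l a x := by
  unfold pd
  rw [fderiv_const_mul ha]
  simp

private lemma pd_cmul_neg {a : (Fin 2 → ℝ) → ℝ} {x : Fin 2 → ℝ}
    (ha : DifferentiableAt ℝ a x) (c : ℝ) (l : Fin 2) :
    pd l (fun x' => c * -a x') x = -(c * pd l a x) := by
  have h : (fun x' => c * -a x') = fun x' => (-c) * a x' := by funext x'; ring
  rw [h, pd_cmul ha]; ring

/-- Proposition 5.1: for the second-order system obtained by differentiating the
conservative Hamiltonian system `ẋ¹ = H₂`, `ẋ² = −H₁` (so `(G¹,G²)(x,y) = −(1/2)·J_H(x)·y`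
with `J_H = ((H₂₁,H₂₂),(−H₁₁,−H₁₂))`, and nonlinear connection `Nⁱⱼ = −(1/2)(J_H)ⁱⱼ`),
the deviation curvature matrix `Pⁱⱼ = −2·∂Gⁱ/∂xʲ + Σₗ yˡ·∂Nⁱⱼ/∂xˡ + Σₗ Nⁱₗ·Nˡⱼ` satisfies
`P_H(x,y) = (1/2)·M_H(x,y) + (1/4)·J_H(x)²`, where the rows of `M_H(x,y)` are the
transposes of `(Hess H₂)(x)·y` and `(−Hess H₁)(x)·y`. -/
theorem deviation_curvature_of_hamiltonian_system
    (H : (Fin 2 → ℝ) → ℝ) (hH : ContDiff ℝ 3 H)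
    (H1 H2 : (Fin 2 → ℝ) → ℝ)
    (hH1 : ∀ x, H1 x = pd 0 H x) (hH2 : ∀ x, H2 x = pd 1 H x)
    (JH : (Fin 2 → ℝ) → Matrix (Fin 2) (Fin 2) ℝ)
    (hJH : ∀ x, JH x = !![pd 0 H2 x, pd 1 H2 x; -(pd 0 H1 x), -(pd 1 H1 x)])
    (G : (Fin 2 → ℝ) → (Fin 2 → ℝ) → Fin 2 → ℝ)
    (hG : ∀ x y i, G x y i = -(1/2) * ∑ j, JH x i j * y j)
    (N : (Fin 2 → ℝ) → Matrix (Fin 2) (Fin 2) ℝ)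
    (hN : ∀ x i j, N x i j = -(1/2) * JH x i j)
    (P : (Fin 2 → ℝ) → (Fin 2 → ℝ) → Matrix (Fin 2) (Fin 2) ℝ)
    (hP : ∀ x y i j, P x y i j =
      -2 * pd j (fun x' => G x' y i) x
      + ∑ l, y l * pd l (fun x' => N x' i j) x
      + ∑ l, N x i l * N x l j)
    (HessH1 HessH2 : (Fin 2 → ℝ) → Matrix (Fin 2) (Fin 2) ℝ)
    (hHessH1 : ∀ x i j, HessH1 x i j = pd j (fun x' => pd i H1 x') x)
    (hHessH2 : ∀ x i j, HessH2 x i j = pd j (fun x' => pd i H2 x') x)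
    (M : (Fin 2 → ℝ) → (Fin 2 → ℝ) → Matrix (Fin 2) (Fin 2) ℝ)
    (hM : ∀ x y, M x y = !![(HessH2 x *ᵥ y) 0, (HessH2 x *ᵥ y) 1;
                            ((-HessH1 x) *ᵥ y) 0, ((-HessH1 x) *ᵥ y) 1]) :
    ∀ x y, P x y = (1/2 : ℝ) • M x y + (1/4 : ℝ) • (JH x * JH x) := by
  intro x y
  -- regularity of H1, H2
  have hH1f : H1 = fun x => pd 0 H x := funext hH1
  have hH2f : H2 = fun x => pd 1 H x := funext hH2
  have hH1c : ContDiff ℝ 2 H1 := by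
    rw [hH1f]; exact contDiff_pd (by exact_mod_cast hH) 0
  have hH2c : ContDiff ℝ 2 H2 := by
    rw [hH2f]; exact contDiff_pd (by exact_mod_cast hH) 1
  have hdiff : ∀ (φ : (Fin 2 → ℝ) → ℝ), ContDiff ℝ 2 φ → ∀ (a : Fin 2) (z : Fin 2 → ℝ),
      DifferentiableAt ℝ (pd a φ) z := by
    intro φ hφ a z
    exact ((contDiff_pd (n := 1) (by exact_mod_cast hφ) a).differentiable one_ne_zero).differentiableAt
  have d10 := hdiff H1 hH1c 0 x
  have d11 := hdiff H1 hH1c 1 x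
  have d20 := hdiff H2 hH2c 0 x
  have d21 := hdiff H2 hH2c 1 x
  -- the G rows as explicit functions
  have hG0 : (fun x' => G x' y 0) = fun x' => -(1/2) * (pd 0 H2 x' * y 0 + pd 1 H2 x' * y 1) := by
    funext x'
    simp [hG, hJH, Fin.sum_univ_two]
  have hG1 : (fun x' => G x' y 1) = fun x' => (1/2) * (pd 0 H1 x' * y 0 + pd 1 H1 x' * y 1) := by
    funext x'
    simp [hG, hJH, Fin.sum_univ_two]
    ring
  -- the N entries as explicit functions
  have hN00 : (fun x' => N x' 0 0) = fun x' => -(1/2) * pd 0 H2 x' := by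
    funext x'; simp [hN, hJH]
  have hN01 : (fun x' => N x' 0 1) = fun x' => -(1/2) * pd 1 H2 x' := by
    funext x'; simp [hN, hJH]
  have hN10 : (fun x' => N x' 1 0) = fun x' => (1/2) * pd 0 H1 x' := by
    funext x'; simp [hN, hJH]
  have hN11 : (fun x' => N x' 1 1) = fun x' => (1/2) * pd 1 H1 x' := by
    funext x'; simp [hN, hJH]
  -- symmetry of second partials of H1 and H2
  have s1 : pd 0 (fun x' => pd 1 H1 x') x = pd 1 (fun x' => pd 0 H1 x') x := pd_comm hH1c 0 1 x
  have s2 : pd 0 (fun x' => pd 1 H2 x') x = pd 1 (fun x' => pd 0 H2 x') x := pd_comm hH2c 0 1 x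
  ext i j
  fin_cases i <;> fin_cases j <;>
    simp only [Fin.zero_eta, Fin.mk_one, Fin.isValue, hP, hM, hHessH1, hHessH2,
      hG0, hG1, hN00, hN01, hN10, hN11, hN, hJH,
      Matrix.add_apply, Matrix.smul_apply, Matrix.mul_apply, Fin.sum_univ_two,
      Matrix.mulVec, dotProduct, Matrix.neg_apply,
      Matrix.cons_val', Matrix.cons_val_zero, Matrix.cons_val_one, Matrix.head_cons,
      Matrix.head_fin_const, Matrix.empty_val', Matrix.cons_val_fin_one, smul_eq_mul,
      pd_comb d20 d21, pd_comb d10 d11,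
      pd_cmul d20, pd_cmul d21, pd_cmul d10, pd_cmul d11,
      pd_cmul_neg d20, pd_cmul_neg d21, pd_cmul_neg d10, pd_cmul_neg d11,
      Matrix.of_apply, Matrix.cons_val_zero, Matrix.cons_val_one, Matrix.head_cons,
      s1, s2] <;>
    ring
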